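/- (Theorem 1, RGAS of the FIE) Suppose the system x⁺ = f(x,w), y = h(x) + v is i-IOSS with KL-function β and K-functions α₁, α₂, the FIE cost V_t satisfies Assumption 1, Assumption 2 holds, and at every time t the FIE attains its infimum (in particular V_t(x̂(0|t) − x̄₀, ŵ_t) ≤ V_t(x₀ − x̄₀, w)). Then the FIE is RGAS: there exist a KL-function βₓ and K-functions α_w, α_v, depending only on β, α₁, α₂ and the comparison functions of Assumptions 1–2, such that for all x₀, x̄₀, all bounded (w, v), and all t ∈ ℕ, |x(t; x₀, w) − x(t; x̂(0|t), ŵ_t)| ≤ βₓ(|x₀ − x̄₀|, t) + α_w(‖w‖_{0:t−1}) + α_v(‖v‖_{0:t}). -/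

import Mathlib

open Filter Topology

/-- A K-function: continuous on [0,∞), strictly increasing on [0,∞), zero at zero. -/
def IsKFun (α : ℝ → ℝ) : Prop :=
  ContinuousOn α (Set.Ici 0) ∧ StrictMonoOn α (Set.Ici 0) ∧ α 0 = 0

/-- A K∞-function: a K-function tending to ∞ at ∞. -/
def IsKInftyFun (α : ℝ → ℝ) : Prop :=
  IsKFun α ∧ Tendsto α atTop atTop

/-- An L-function: continuous on [0,∞), nonincreasing on [0,∞), tending to 0 at ∞. -/
def IsLFun (φ : ℝ → ℝ) : Prop :=
  ContinuousOn φ (Set.Ici 0) ∧ AntitoneOn φ (Set.Ici 0) ∧ Tendsto φ atTop (𝓝 0)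

/-- A KL-function. -/
def IsKLFun (β : ℝ → ℝ → ℝ) : Prop :=
  (∀ t, 0 ≤ t → IsKFun fun s => β s t) ∧ (∀ s, 0 ≤ s → IsLFun fun t => β s t)

/-- Solution of the discrete-time system `x⁺ = f(x,w)`:
`traj f x₀ w t = x(t; x₀, w)`. -/
def traj {X W : Type*} (f : X → W → X) (x0 : X) (w : ℕ → W) : ℕ → X
  | 0 => x0
  | t + 1 => f (traj f x0 w t) (w t)

/-- `seqSup z m = max_{0 ≤ i < m} ‖z i‖` (0 when the index range is empty), so
`‖z‖_{0:t-1} = seqSup z t` and `‖z‖_{0:t} = seqSup z (t+1)`. -/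
noncomputable def seqSup {E : Type*} [SeminormedAddGroup E] (z : ℕ → E) (m : ℕ) : ℝ :=
  (((Finset.range m).sup fun i => ‖z i‖₊ : NNReal) : ℝ)


open scoped NNReal

lemma IsKFun.nonneg {α : ℝ → ℝ} (h : IsKFun α) {s : ℝ} (hs : 0 ≤ s) : 0 ≤ α s := by
  rcases eq_or_lt_of_le hs with h0 | h0
  · simp [← h0, h.2.2]
  · have := h.2.1 (Set.self_mem_Ici (a := (0:ℝ))) (le_of_lt h0) h0
    simpa [h.2.2] using this.le

lemma IsKFun.mono' {α : ℝ → ℝ} (h : IsKFun α) {a b : ℝ} (ha : 0 ≤ a) (hab : a ≤ b) :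
    α a ≤ α b := h.2.1.monotoneOn ha (ha.trans hab) hab

lemma IsKFun.add {α α' : ℝ → ℝ} (h : IsKFun α) (h' : IsKFun α') :
    IsKFun (fun s => α s + α' s) :=
  ⟨h.1.add h'.1, h.2.1.add h'.2.1, by simp [h.2.2, h'.2.2]⟩

lemma IsKFun.compK {α g : ℝ → ℝ} (h : IsKFun α) (hg : IsKFun g) :
    IsKFun (fun s => α (g s)) := by
  have hmaps : Set.MapsTo g (Set.Ici 0) (Set.Ici 0) := fun s hs => hg.nonneg hs
  refine ⟨h.1.comp hg.1 hmaps, ?_, by simp [hg.2.2, h.2.2]⟩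
  intro a ha b hb hab
  exact h.2.1 (hmaps ha) (hmaps hb) (hg.2.1 ha hb hab)

lemma isKFun_mul {c : ℝ} (hc : 0 < c) : IsKFun (fun s => c * s) :=
  ⟨(continuous_const.mul continuous_id).continuousOn,
    fun a _ b _ hab => by simpa using (mul_lt_mul_iff_right₀ hc).mpr hab, by simp⟩

lemma IsKFun.two_le {α : ℝ → ℝ} (h : IsKFun α) {a b : ℝ} (ha : 0 ≤ a) (hb : 0 ≤ b) :
    α (a + b) ≤ α (2 * a) + α (2 * b) := by
  rcases le_total a b with hab | hab
  · have h1 : α (a + b) ≤ α (2 * b) := h.mono' (by linarith) (by linarith)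
    have h2 : 0 ≤ α (2 * a) := h.nonneg (by linarith)
    linarith
  · have h1 : α (a + b) ≤ α (2 * a) := h.mono' (by linarith) (by linarith)
    have h2 : 0 ≤ α (2 * b) := h.nonneg (by linarith)
    linarith

lemma IsKFun.three_le {α : ℝ → ℝ} (h : IsKFun α) {a b c : ℝ}
    (ha : 0 ≤ a) (hb : 0 ≤ b) (hc : 0 ≤ c) :
    α (a + b + c) ≤ α (3 * a) + α (3 * b) + α (3 * c) := by
  have h1 : 0 ≤ α (3 * a) := h.nonneg (by linarith)
  have h2 : 0 ≤ α (3 * b) := h.nonneg (by linarith)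
  have h3 : 0 ≤ α (3 * c) := h.nonneg (by linarith)
  rcases le_total a b with hab | hab
  · rcases le_total b c with hbc | hbc
    · have : α (a + b + c) ≤ α (3 * c) := h.mono' (by linarith) (by linarith)
      linarith
    · have : α (a + b + c) ≤ α (3 * b) := h.mono' (by linarith) (by linarith)
      linarith
  · rcases le_total a c with hac | hac
    · have : α (a + b + c) ≤ α (3 * c) := h.mono' (by linarith) (by linarith)
      linarith
    · have : α (a + b + c) ≤ α (3 * a) := h.mono' (by linarith) (by linarith)
      linarith

lemma IsKLFun.nonneg {ρ : ℝ → ℝ → ℝ} (h : IsKLFun ρ) {s t : ℝ} (hs : 0 ≤ s) (ht : 0 ≤ t) :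
    0 ≤ ρ s t := (h.1 t ht).nonneg hs

lemma IsKLFun.add {ρ ρ' : ℝ → ℝ → ℝ} (h : IsKLFun ρ) (h' : IsKLFun ρ') :
    IsKLFun (fun s t => ρ s t + ρ' s t) := by
  refine ⟨fun t ht => (h.1 t ht).add (h'.1 t ht), fun s hs => ?_⟩
  obtain ⟨c1, a1, t1⟩ := h.2 s hs
  obtain ⟨c2, a2, t2⟩ := h'.2 s hs
  exact ⟨c1.add c2, a1.add a2, by simpa using t1.add t2⟩

/-- Composition of a K function with a KL function is KL. -/
lemma IsKFun.compKL {α : ℝ → ℝ} {ρ : ℝ → ℝ → ℝ} (h : IsKFun α) (hρ : IsKLFun ρ) :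
    IsKLFun (fun s t => α (ρ s t)) := by
  refine ⟨fun t ht => h.compK (hρ.1 t ht), fun s hs => ?_⟩
  obtain ⟨hc, ha, ht⟩ := hρ.2 s hs
  have hmaps : Set.MapsTo (fun t => ρ s t) (Set.Ici 0) (Set.Ici 0) :=
    fun t htt => hρ.nonneg hs htt
  refine ⟨h.1.comp hc hmaps, ?_, ?_⟩
  · intro a haa b hbb hab
    exact h.mono' (hρ.nonneg hs hbb) (ha haa hbb hab)
  · have h1 : Tendsto (fun t => ρ s t) atTop (𝓝[Set.Ici 0] 0) := by
      refine tendsto_nhdsWithin_of_tendsto_nhds_of_eventually_within _ ht ?_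
      filter_upwards [eventually_ge_atTop (0:ℝ)] with t htt using hρ.nonneg hs htt
    have h2 : ContinuousWithinAt α (Set.Ici 0) 0 := h.1 0 Set.self_mem_Ici
    have := h2.tendsto.comp h1
    simpa [h.2.2, Function.comp_def] using this

/-- Inverse of a K∞ function. -/
lemma IsKInftyFun.exists_inv {γ : ℝ → ℝ} (hγ : IsKInftyFun γ) :
    ∃ g : ℝ → ℝ, Continuous g ∧ IsKFun g ∧ (∀ r, 0 ≤ g r) ∧
      (∀ s, 0 ≤ s → g (γ s) = s) ∧ (∀ r, 0 ≤ r → γ (g r) = r) := by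
  obtain ⟨⟨hcont, hmono, h0⟩, htop⟩ := hγ
  set γ' : ℝ≥0 → ℝ≥0 := fun s => ⟨γ s, IsKFun.nonneg ⟨hcont, hmono, h0⟩ s.2⟩ with hγ'
  have hsm : StrictMono γ' := by
    intro a b hab
    have : γ a < γ b := hmono a.2 b.2 (by exact_mod_cast hab)
    exact_mod_cast this
  have hsurj : Function.Surjective γ' := by
    intro r
    obtain ⟨M, hM1, hM2⟩ := ((htop.eventually_ge_atTop (r : ℝ)).and (eventually_ge_atTop 0)).exists
    have hr : (r : ℝ) ∈ Set.Icc (γ 0) (γ M) := by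
      constructor
      · rw [h0]; exact r.2
      · exact hM1
    have := intermediate_value_Icc hM2 (hcont.mono (fun x hx => hx.1))
    obtain ⟨s, hs, hgs⟩ := this hr
    exact ⟨⟨s, hs.1⟩, Subtype.ext hgs⟩
  set e := StrictMono.orderIsoOfSurjective γ' hsm hsurj with he
  set g : ℝ → ℝ := fun r => ((e.symm (Real.toNNReal r) : ℝ≥0) : ℝ) with hg
  have hgcont : Continuous g :=
    NNReal.continuous_coe.comp (e.symm.continuous.comp continuous_real_toNNReal)
  have hgγ : ∀ s, 0 ≤ s → g (γ s) = s := by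
    intro s hs
    have h1 : Real.toNNReal (γ s) = γ' ⟨s, hs⟩ := by
      apply Subtype.ext
      simp only [γ', Real.coe_toNNReal']
      exact max_eq_left (IsKFun.nonneg ⟨hcont, hmono, h0⟩ hs)
    have h2 : γ' ⟨s, hs⟩ = e ⟨s, hs⟩ := by
      rw [he]; exact (congrFun (StrictMono.coe_orderIsoOfSurjective γ' hsm hsurj) _).symm
    simp [g, h1, h2]
    exact congrArg NNReal.toReal (e.symm_apply_apply ⟨s, hs⟩)
  have hγg : ∀ r, 0 ≤ r → γ (g r) = r := by
    intro r hr
    have := StrictMono.orderIsoOfSurjective_self_symm_apply γ' hsm hsurj (Real.toNNReal r)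
    have h2 : (γ' (e.symm (Real.toNNReal r)) : ℝ) = ((Real.toNNReal r : ℝ≥0) : ℝ) := by
      exact congrArg NNReal.toReal this
    exact h2.trans (Real.coe_toNNReal r hr)
  have hg0 : g 0 = 0 := by
    have := hgγ 0 le_rfl; rwa [h0] at this
  have hgsm : StrictMonoOn g (Set.Ici 0) := by
    intro a ha b hb hab
    have : Real.toNNReal a < Real.toNNReal b := by
      rw [Real.toNNReal_lt_toNNReal_iff (lt_of_le_of_lt ha hab)]; exact hab
    exact_mod_cast e.symm.strictMono this
  exact ⟨g, hgcont, ⟨hgcont.continuousOn, hgsm, hg0⟩, fun r => (e.symm _).2, hgγ, hγg⟩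

lemma seqSup_nonneg {E : Type*} [SeminormedAddGroup E] (z : ℕ → E) (m : ℕ) :
    0 ≤ seqSup z m := NNReal.coe_nonneg _

lemma norm_le_seqSup {E : Type*} [SeminormedAddGroup E] (z : ℕ → E) {i m : ℕ} (h : i < m) :
    ‖z i‖ ≤ seqSup z m := by
  have := Finset.le_sup (f := fun i => ‖z i‖₊) (Finset.mem_range.mpr h)
  exact_mod_cast this

lemma seqSup_le {E : Type*} [SeminormedAddGroup E] {z : ℕ → E} {m : ℕ} {c : ℝ}
    (hc : 0 ≤ c) (h : ∀ i, i < m → ‖z i‖ ≤ c) : seqSup z m ≤ c := by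
  have : (Finset.range m).sup (fun i => ‖z i‖₊) ≤ ⟨c, hc⟩ := by
    apply Finset.sup_le
    intro i hi
    exact_mod_cast h i (Finset.mem_range.mp hi)
  exact_mod_cast this

lemma seqSup_add_le {E : Type*} [SeminormedAddGroup E] (a b : ℕ → E) (m : ℕ) :
    seqSup (fun i => a i + b i) m ≤ seqSup a m + seqSup b m := by
  refine seqSup_le (add_nonneg (seqSup_nonneg _ _) (seqSup_nonneg _ _)) fun i hi => ?_
  calc ‖a i + b i‖ ≤ ‖a i‖ + ‖b i‖ := norm_add_le _ _
    _ ≤ seqSup a m + seqSup b m :=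
      add_le_add (norm_le_seqSup a hi) (norm_le_seqSup b hi)

lemma seqSup_sub_le {E : Type*} [SeminormedAddCommGroup E] (a b : ℕ → E) (m : ℕ) :
    seqSup (fun i => a i - b i) m ≤ seqSup a m + seqSup b m := by
  refine seqSup_le (add_nonneg (seqSup_nonneg _ _) (seqSup_nonneg _ _)) fun i hi => ?_
  calc ‖a i - b i‖ ≤ ‖a i‖ + ‖b i‖ := norm_sub_le _ _
    _ ≤ seqSup a m + seqSup b m :=
      add_le_add (norm_le_seqSup a hi) (norm_le_seqSup b hi)

/-- (Theorem 1, RGAS of the FIE.)  If the system is i-IOSS, the cost satisfies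
Assumption 1, Assumption 2 holds, and the FIE attains its infimum, then the FIE
is RGAS, with comparison functions depending only on the i-IOSS comparison
functions and those of Assumptions 1–2. -/
theorem fie_rgas
    (n g p : ℕ)
    (f : EuclideanSpace ℝ (Fin n) → EuclideanSpace ℝ (Fin g) → EuclideanSpace ℝ (Fin n))
    (h : EuclideanSpace ℝ (Fin n) → EuclideanSpace ℝ (Fin p))
    (hf : Continuous fun q : EuclideanSpace ℝ (Fin n) × EuclideanSpace ℝ (Fin g) => f q.1 q.2)
    (hh : Continuous h)
    -- i-IOSS of the system
    (β : ℝ → ℝ → ℝ) (α₁ α₂ : ℝ → ℝ)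
    (hβ : IsKLFun β) (hα₁ : IsKFun α₁) (hα₂ : IsKFun α₂)
    (hIOSS : ∀ (x01 x02 : EuclideanSpace ℝ (Fin n)) (w1 w2 : ℕ → EuclideanSpace ℝ (Fin g))
      (t : ℕ),
      ‖traj f x01 w1 t - traj f x02 w2 t‖ ≤
        β ‖x01 - x02‖ t + α₁ (seqSup (fun i => w1 i - w2 i) t)
          + α₂ (seqSup (fun i => h (traj f x01 w1 i) - h (traj f x02 w2 i)) (t + 1)))
    -- comparison functions of Assumption 1
    (ρₗ ρᵤ : ℝ → ℝ → ℝ) (γₗw γₗv γᵤw γᵤv : ℝ → ℝ)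
    (hρᵤ : IsKLFun ρᵤ)
    (hρₗ : ∀ t : ℝ, 0 ≤ t → IsKInftyFun fun s => ρₗ s t)
    (hγₗw : IsKInftyFun γₗw) (hγₗv : IsKInftyFun γₗv)
    (hγᵤw : IsKInftyFun γᵤw) (hγᵤv : IsKInftyFun γᵤv)
    -- γ̲_{x,t}⁻¹ : the inverse of s ↦ ρₗ s t on [0, ∞)
    (ι : ℝ → ℝ → ℝ)
    (hι₁ : ∀ t : ℝ, 0 ≤ t → ∀ s : ℝ, 0 ≤ s → ι (ρₗ s t) t = s)
    (hι₂ : ∀ t : ℝ, 0 ≤ t → ∀ r : ℝ, 0 ≤ r → ρₗ (ι r t) t = r ∧ 0 ≤ ι r t)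
    -- Assumption 2
    (hA2 : ∃ βbarx αbarw αbarv : _, IsKLFun βbarx ∧ IsKFun αbarw ∧ IsKFun αbarv ∧
      ∀ sx sw sv t : ℝ, 0 ≤ sx → 0 ≤ sw → 0 ≤ sv → 0 ≤ t →
        β (sx + ι (ρᵤ sx t + γᵤw sw + γᵤv sv) t) t ≤ βbarx sx t + αbarw sw + αbarv sv) :
    -- RGAS of the FIE
    ∃ βx : ℝ → ℝ → ℝ, ∃ αw αv : ℝ → ℝ, IsKLFun βx ∧ IsKFun αw ∧ IsKFun αv ∧
      ∀ (x0 xbar0 : EuclideanSpace ℝ (Fin n)) (w : ℕ → EuclideanSpace ℝ (Fin g))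
        (v : ℕ → EuclideanSpace ℝ (Fin p)),
        (∃ Mw : ℝ, ∀ i, ‖w i‖ ≤ Mw) → (∃ Mv : ℝ, ∀ i, ‖v i‖ ≤ Mv) →
        ∀ (V : ℕ → EuclideanSpace ℝ (Fin n) → (ℕ → EuclideanSpace ℝ (Fin g)) → ℝ)
          (xhat0 : ℕ → EuclideanSpace ℝ (Fin n)) (what : ℕ → ℕ → EuclideanSpace ℝ (Fin g)),
          -- Assumption 1: bounds on the cost, where the fitted noise of a candidate
          -- (χ0, ω) is ν(i) = y(i) - h(x(i; χ0, ω)) with y(i) = h(x(i; x0, w)) + v(i)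
          (∀ (t : ℕ) (χ0 : EuclideanSpace ℝ (Fin n)) (ω : ℕ → EuclideanSpace ℝ (Fin g)),
            ρₗ ‖χ0 - xbar0‖ t + γₗw (seqSup ω t)
              + γₗv (seqSup
                  (fun i => (h (traj f x0 w i) + v i) - h (traj f χ0 ω i)) (t + 1))
              ≤ V t χ0 ω ∧
            V t χ0 ω ≤ ρᵤ ‖χ0 - xbar0‖ t + γᵤw (seqSup ω t)
              + γᵤv (seqSup
                  (fun i => (h (traj f x0 w i) + v i) - h (traj f χ0 ω i)) (t + 1))) →
          -- the FIE attains its infimum at (xhat0 t, what t); in particular optimality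
          (∀ t : ℕ, V t (xhat0 t) (what t) ≤ V t x0 w) →
          ∀ t : ℕ,
            ‖traj f x0 w t - traj f (xhat0 t) (what t) t‖ ≤
              βx ‖x0 - xbar0‖ t + αw (seqSup w t) + αv (seqSup v (t + 1)) := by
  
  classical
  obtain ⟨βbarx, αbarw, αbarv, hβbarx, hαbarw, hαbarv, hA2'⟩ := hA2
  obtain ⟨gw, _, hgwK, hgwnn, hgw1, hgw2⟩ := hγₗw.exists_inv
  obtain ⟨gv, _, hgvK, hgvnn, hgv1, hgv2⟩ := hγₗv.exists_inv
  set θw : ℝ → ℝ := fun r => α₁ (6 * gw (3 * r)) with hθw_def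
  set θv : ℝ → ℝ := fun r => α₂ (6 * gv (3 * r)) with hθv_def
  have h6 : (0:ℝ) < 6 := by norm_num
  have h3 : (0:ℝ) < 3 := by norm_num
  have hθw : IsKFun θw :=
    hα₁.compK ((isKFun_mul h6).compK (hgwK.compK (isKFun_mul h3)))
  have hθv : IsKFun θv :=
    hα₂.compK ((isKFun_mul h6).compK (hgvK.compK (isKFun_mul h3)))
  refine ⟨fun s t => βbarx s t + (θw (ρᵤ s t) + θv (ρᵤ s t)),
    fun s => αbarw s + (α₁ (2 * s) + (θw (γᵤw s) + θv (γᵤw s))),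
    fun s => αbarv s + (α₂ (2 * s) + (θw (γᵤv s) + θv (γᵤv s))),
    hβbarx.add ((hθw.compKL hρᵤ).add (hθv.compKL hρᵤ)),
    hαbarw.add ((hα₁.compK (isKFun_mul two_pos)).add
      ((hθw.compK hγᵤw.1).add (hθv.compK hγᵤw.1))),
    hαbarv.add ((hα₂.compK (isKFun_mul two_pos)).add
      ((hθw.compK hγᵤv.1).add (hθv.compK hγᵤv.1))), ?_⟩
  intro x0 xbar0 w v _ _ V xhat0 what hA1 hopt t
  set sx : ℝ := ‖x0 - xbar0‖ with hsx_def
  set sw : ℝ := seqSup w t with hsw_def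
  set sv : ℝ := seqSup v (t + 1) with hsv_def
  have hsx : 0 ≤ sx := norm_nonneg _
  have hsw : 0 ≤ sw := seqSup_nonneg _ _
  have hsv : 0 ≤ sv := seqSup_nonneg _ _
  have ht : (0:ℝ) ≤ (t : ℝ) := Nat.cast_nonneg t
  set r1 : ℝ := ρᵤ sx t with hr1_def
  set r2 : ℝ := γᵤw sw with hr2_def
  set r3 : ℝ := γᵤv sv with hr3_def
  have hr1 : 0 ≤ r1 := hρᵤ.nonneg hsx ht
  have hr2 : 0 ≤ r2 := hγᵤw.1.nonneg hsw
  have hr3 : 0 ≤ r3 := hγᵤv.1.nonneg hsv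
  set R : ℝ := r1 + r2 + r3 with hR_def
  have hR : 0 ≤ R := by positivity
  -- the cost of the true trajectory is at most R
  have htrue : V t x0 w ≤ R := by
    have := (hA1 t x0 w).2
    rw [show (fun i => (h (traj f x0 w i) + v i) - h (traj f x0 w i)) = v from
      funext fun i => add_sub_cancel_left _ _] at this
    exact this
  -- lower bound on the optimal cost
  set e : ℝ := ‖xhat0 t - xbar0‖ with he_def
  set a : ℝ := seqSup (what t) t with ha_def
  set νh : ℕ → EuclideanSpace ℝ (Fin p) :=
    fun i => (h (traj f x0 w i) + v i) - h (traj f (xhat0 t) (what t) i) with hνh_def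
  set b : ℝ := seqSup νh (t + 1) with hb_def
  have he0 : 0 ≤ e := norm_nonneg _
  have ha0 : 0 ≤ a := seqSup_nonneg _ _
  have hb0 : 0 ≤ b := seqSup_nonneg _ _
  have hρₗK : IsKFun (fun s => ρₗ s (t : ℝ)) := (hρₗ (t : ℝ) ht).1
  have hlow : ρₗ e t + γₗw a + γₗv b ≤ R :=
    le_trans (le_trans (hA1 t (xhat0 t) (what t)).1 (hopt t)) htrue
  have hρₗe : ρₗ e t ≤ R := by
    have h1 := hγₗw.1.nonneg ha0
    have h2 := hγₗv.1.nonneg hb0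
    linarith
  have hγwa : γₗw a ≤ R := by
    have h1 := hρₗK.nonneg he0
    have h2 := hγₗv.1.nonneg hb0
    linarith
  have hγvb : γₗv b ≤ R := by
    have h1 := hρₗK.nonneg he0
    have h2 := hγₗw.1.nonneg ha0
    linarith
  -- e ≤ ι R t
  have hιmono : e ≤ ι R t := by
    have heq : ι (ρₗ e t) t = e := hι₁ (t : ℝ) ht e he0
    by_contra hcon
    push_neg at hcon
    obtain ⟨hq1, hq1n⟩ := hι₂ (t : ℝ) ht R hR
    rw [← heq] at hcon
    obtain ⟨hq2, hq2n⟩ := hι₂ (t : ℝ) ht (ρₗ e t) (hρₗK.nonneg he0)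
    have := hρₗK.2.1 (Set.mem_Ici.mpr hq1n) (Set.mem_Ici.mpr hq2n) hcon
    simp only at this
    rw [hq1, hq2] at this
    exact absurd hρₗe (not_le.mpr this)
  -- a ≤ gw R, b ≤ gv R
  have haR : a ≤ gw R := by
    have := hgwK.mono' (hγₗw.1.nonneg ha0) hγwa
    rwa [hgw1 a ha0] at this
  have hbR : b ≤ gv R := by
    have := hgvK.mono' (hγₗv.1.nonneg hb0) hγvb
    rwa [hgv1 b hb0] at this
  -- i-IOSS
  have hioss := hIOSS x0 (xhat0 t) w (what t) t
  -- term 1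
  have hT1 : β ‖x0 - xhat0 t‖ t ≤ βbarx sx t + αbarw sw + αbarv sv := by
    have hβK : IsKFun (fun s => β s (t : ℝ)) := hβ.1 (t : ℝ) ht
    have hd : ‖x0 - xhat0 t‖ ≤ sx + e := by
      calc ‖x0 - xhat0 t‖ = ‖(x0 - xbar0) - (xhat0 t - xbar0)‖ := by
            rw [sub_sub_sub_cancel_right]
        _ ≤ sx + e := norm_sub_le _ _
    calc β ‖x0 - xhat0 t‖ t ≤ β (sx + ι R t) t :=
          hβK.mono' (norm_nonneg _) (hd.trans (by linarith))
      _ ≤ βbarx sx t + αbarw sw + αbarv sv := hA2' sx sw sv t hsx hsw hsv ht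
  -- splitting lemma for gw/gv terms
  have hsplitw : α₁ (2 * gw R) ≤ θw r1 + θw r2 + θw r3 := by
    have h1 : gw R ≤ gw (3 * r1) + gw (3 * r2) + gw (3 * r3) :=
      hgwK.three_le hr1 hr2 hr3
    have h2 : α₁ (2 * gw R) ≤
        α₁ (2 * gw (3 * r1) + 2 * gw (3 * r2) + 2 * gw (3 * r3)) :=
      hα₁.mono' (by linarith [hgwnn R]) (by linarith)
    have h3 := hα₁.three_le (a := 2 * gw (3 * r1)) (b := 2 * gw (3 * r2))
      (c := 2 * gw (3 * r3)) (by linarith [hgwnn (3 * r1)]) (by linarith [hgwnn (3 * r2)])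
      (by linarith [hgwnn (3 * r3)])
    simp only [show ∀ X : ℝ, 3 * (2 * X) = 6 * X from fun X => by ring] at h3
    exact h2.trans h3
  have hsplitv : α₂ (2 * gv R) ≤ θv r1 + θv r2 + θv r3 := by
    have h1 : gv R ≤ gv (3 * r1) + gv (3 * r2) + gv (3 * r3) :=
      hgvK.three_le hr1 hr2 hr3
    have h2 : α₂ (2 * gv R) ≤
        α₂ (2 * gv (3 * r1) + 2 * gv (3 * r2) + 2 * gv (3 * r3)) :=
      hα₂.mono' (by linarith [hgvnn R]) (by linarith)
    have h3 := hα₂.three_le (a := 2 * gv (3 * r1)) (b := 2 * gv (3 * r2))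
      (c := 2 * gv (3 * r3)) (by linarith [hgvnn (3 * r1)]) (by linarith [hgvnn (3 * r2)])
      (by linarith [hgvnn (3 * r3)])
    simp only [show ∀ X : ℝ, 3 * (2 * X) = 6 * X from fun X => by ring] at h3
    exact h2.trans h3
  -- term 2
  have hT2 : α₁ (seqSup (fun i => w i - what t i) t) ≤
      α₁ (2 * sw) + (θw r1 + θw r2 + θw r3) := by
    have hd : seqSup (fun i => w i - what t i) t ≤ sw + gw R :=
      (seqSup_sub_le w (what t) t).trans (by linarith)
    have h1 : α₁ (seqSup (fun i => w i - what t i) t) ≤ α₁ (2 * sw) + α₁ (2 * gw R) := by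
      have := hα₁.two_le hsw (hgwnn R)
      have hm := hα₁.mono' (seqSup_nonneg _ _) hd
      linarith
    linarith [hsplitw]
  -- term 3
  have hT3 : α₂ (seqSup
      (fun i => h (traj f x0 w i) - h (traj f (xhat0 t) (what t) i)) (t + 1)) ≤
      α₂ (2 * sv) + (θv r1 + θv r2 + θv r3) := by
    have heqf : (fun i => h (traj f x0 w i) - h (traj f (xhat0 t) (what t) i)) =
        fun i => νh i - v i := by
      funext i
      simp only [hνh_def]
      abel
    have hd : seqSup
        (fun i => h (traj f x0 w i) - h (traj f (xhat0 t) (what t) i)) (t + 1) ≤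
        gv R + sv := by
      rw [heqf]
      exact (seqSup_sub_le νh v (t + 1)).trans (by linarith)
    have h1 : α₂ (seqSup
        (fun i => h (traj f x0 w i) - h (traj f (xhat0 t) (what t) i)) (t + 1)) ≤
        α₂ (2 * gv R) + α₂ (2 * sv) := by
      have := hα₂.two_le (hgvnn R) hsv
      have hm := hα₂.mono' (seqSup_nonneg _ _) hd
      linarith
    linarith [hsplitv]
  calc ‖traj f x0 w t - traj f (xhat0 t) (what t) t‖ ≤ _ := hioss
    _ ≤ _ := by
      have := add_le_add (add_le_add hT1 hT2) hT3
      simp only [hr1_def, hr2_def, hr3_def] at this ⊢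
      linarith
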